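/- Let F = (x₁² + ⋯ + xₙ²)^s with n ≥ 2, s ≥ 1, and R = ℂ[∂₁,…,∂ₙ]. Then the operator (∂₁² + ⋯ + ∂ₙ²)^{s+1} annihilates F, while (∂₁² + ⋯ + ∂ₙ²)^s does not; consequently ∂₁^{2s} does not annihilate F and the algebra R/Ann_R(F) has socle degree exactly 2s. -/

import Mathlib

open MvPolynomial

/-- The apolarity action: `P`, viewed as a constant-coefficient differential operator,
applied to the polynomial `F`. -/
noncomputable def apolar {σ : Type*} [DecidableEq σ] (P F : MvPolynomial σ ℂ) :
    MvPolynomial σ ℂ :=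
  ∑ d ∈ P.support, ∑ e ∈ F.support,
    monomial (e - d)
      (P.coeff d * F.coeff e * ∏ i ∈ d.support ∪ e.support, ((e i).descFactorial (d i) : ℂ))

/-- The annihilator `Ann_R(F) = {P : P(∂)F = 0}` as a set. -/
def annSet {σ : Type*} [DecidableEq σ] (F : MvPolynomial σ ℂ) : Set (MvPolynomial σ ℂ) :=
  {P | apolar P F = 0}

/-- The degree-`i` graded piece of the quotient `R ⧸ I`: the image of the homogeneous
degree-`i` polynomials. -/
noncomputable def quotDeg {σ : Type*} (I : Ideal (MvPolynomial σ ℂ)) (i : ℕ) :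
    Submodule ℂ (MvPolynomial σ ℂ ⧸ I) :=
  (homogeneousSubmodule σ ℂ i).map (Ideal.Quotient.mkₐ ℂ I).toLinearMap

/-- `×L^(c-2i) : A_i → A_(c-i)` is bijective, for `A = R ⧸ I`. -/
def lefschetzAt {σ : Type*} (I : Ideal (MvPolynomial σ ℂ)) (c : ℕ) (L : MvPolynomial σ ℂ)
    (i : ℕ) : Prop :=
  (∀ x ∈ quotDeg I i, Ideal.Quotient.mk I L ^ (c - 2 * i) * x = 0 → x = 0) ∧
  (∀ y ∈ quotDeg I (c - i), ∃ x ∈ quotDeg I i, Ideal.Quotient.mk I L ^ (c - 2 * i) * x = y)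

open Finsupp in
lemma exists_lt_of_degree_lt {σ : Type*} [DecidableEq σ] (d e : σ →₀ ℕ)
    (h : e.degree < d.degree) : ∃ j, e j < d j := by
  by_contra hc
  push_neg at hc
  have h1 : d.degree ≤ ∑ j ∈ d.support, e j :=
    Finset.sum_le_sum fun j _ => hc j
  have h2 : ∑ j ∈ d.support, e j ≤ ∑ j ∈ d.support ∪ e.support, e j :=
    Finset.sum_le_sum_of_subset_of_nonneg Finset.subset_union_left
      (fun _ _ _ => Nat.zero_le _)
  have h3 : ∑ j ∈ d.support ∪ e.support, e j = e.degree := by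
    rw [Finsupp.degree]
    exact (Finset.sum_subset Finset.subset_union_right
      (fun j _ hj => Finsupp.notMem_support_iff.1 hj)).symm
  omega

lemma eq_of_le_of_degree_eq {σ : Type*} [DecidableEq σ] (d e : σ →₀ ℕ) (hde : d.degree = e.degree)
    (h : ∀ j, d j ≤ e j) : d = e := by
  have hd : d.degree = ∑ j ∈ d.support ∪ e.support, d j := by
    rw [Finsupp.degree]
    exact Finset.sum_subset Finset.subset_union_left (fun j _ hj => Finsupp.notMem_support_iff.1 hj)
  have he : e.degree = ∑ j ∈ d.support ∪ e.support, e j := by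
    rw [Finsupp.degree]
    exact Finset.sum_subset Finset.subset_union_right (fun j _ hj => Finsupp.notMem_support_iff.1 hj)
  have := (Finset.sum_eq_sum_iff_of_le (s := d.support ∪ e.support)
    (f := fun j => d j) (g := fun j => e j) (fun j _ => h j)).1 (by omega)
  ext j
  by_cases hj : j ∈ d.support ∪ e.support
  · exact this j hj
  · rw [Finset.mem_union] at hj
    push_neg at hj
    rw [Finsupp.notMem_support_iff.1 hj.1, Finsupp.notMem_support_iff.1 hj.2]

lemma exists_lt_of_ne_of_degree_eq {σ : Type*} [DecidableEq σ] (d e : σ →₀ ℕ)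
    (hde : d.degree = e.degree) (hne : d ≠ e) : ∃ j, e j < d j := by
  by_contra hc
  push_neg at hc
  exact hne (eq_of_le_of_degree_eq d e hde hc)

lemma apolar_term_zero {σ : Type*} [DecidableEq σ] (P F : MvPolynomial σ ℂ)
    {d e : σ →₀ ℕ} (hd : d ∈ P.support) (h : ∃ j, e j < d j) :
    (monomial (e - d)
      (P.coeff d * F.coeff e * ∏ i ∈ d.support ∪ e.support, ((e i).descFactorial (d i) : ℂ)))
      = 0 := by
  obtain ⟨j, hj⟩ := h
  have hj' : j ∈ d.support ∪ e.support :=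
    Finset.mem_union_left _ (Finsupp.mem_support_iff.2 (by omega))
  rw [Finset.prod_eq_zero hj' (by
    rw [Nat.descFactorial_eq_zero_iff_lt.2 hj, Nat.cast_zero]), mul_zero, monomial_zero]

lemma apolar_eq_zero {σ : Type*} [DecidableEq σ] (P F : MvPolynomial σ ℂ)
    (h : ∀ d ∈ P.support, ∀ e ∈ F.support, ∃ j, e j < d j) : apolar P F = 0 := by
  refine Finset.sum_eq_zero fun d hd => Finset.sum_eq_zero fun e he => ?_
  exact apolar_term_zero P F hd (h d hd e he)

lemma apolar_diag {σ : Type*} [DecidableEq σ] (P F : MvPolynomial σ ℂ)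
    (h : ∀ d ∈ P.support, ∀ e ∈ F.support, d ≠ e → ∃ j, e j < d j) :
    apolar P F = monomial 0
      (∑ d ∈ P.support, P.coeff d * F.coeff d * ∏ j ∈ d.support, ((d j).factorial : ℂ)) := by
  unfold apolar
  rw [map_sum]
  refine Finset.sum_congr rfl fun d hd => ?_
  by_cases hdF : d ∈ F.support
  · rw [Finset.sum_eq_single_of_mem d hdF
      (fun e he hne => apolar_term_zero P F hd (h d hd e he (Ne.symm hne)))]
    simp [Nat.descFactorial_self]
  · rw [Finset.sum_eq_zero
      (fun e he => apolar_term_zero P F hd (h d hd e he (by rintro rfl; exact hdF he))),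
      MvPolynomial.notMem_support_iff.1 hdF]
    simp

section Conc
variable (n s : ℕ)

/-- the nat-coefficient model -/
noncomputable def Gp (n s : ℕ) : MvPolynomial (Fin n) ℕ := (∑ i : Fin n, X i ^ 2) ^ s

lemma Fp_eq : ((∑ i : Fin n, X i ^ 2 : MvPolynomial (Fin n) ℂ)) ^ s
    = map (Nat.castRingHom ℂ) (Gp n s) := by
  unfold Gp
  rw [map_pow, map_sum]
  simp

lemma Fp_support : (((∑ i : Fin n, X i ^ 2 : MvPolynomial (Fin n) ℂ)) ^ s).support
    = (Gp n s).support := by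
  rw [Fp_eq]
  exact MvPolynomial.support_map_of_injective _ (fun a b h => Nat.cast_injective h)

lemma Fp_coeff (d : Fin n →₀ ℕ) :
    coeff d (((∑ i : Fin n, X i ^ 2 : MvPolynomial (Fin n) ℂ)) ^ s)
      = (((Gp n s).coeff d : ℕ) : ℂ) := by
  rw [Fp_eq, coeff_map]; rfl

lemma Fp_homog : (((∑ i : Fin n, X i ^ 2 : MvPolynomial (Fin n) ℂ)) ^ s).IsHomogeneous (2 * s) := by
  have h2 : ((∑ i : Fin n, X i ^ 2 : MvPolynomial (Fin n) ℂ)).IsHomogeneous 2 :=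
    IsHomogeneous.sum _ _ _ fun i _ => isHomogeneous_X_pow _ _
  exact h2.pow s

lemma degree_of_mem_support {d : Fin n →₀ ℕ}
    (hd : d ∈ (((∑ i : Fin n, X i ^ 2 : MvPolynomial (Fin n) ℂ)) ^ s).support) :
    d.degree = 2 * s := by
  rw [Finsupp.degree_eq_weight_one]
  exact Fp_homog n s (MvPolynomial.mem_support_iff.1 hd)

lemma Gp_coeff_pos (hn : 0 < n) (i0 : Fin n) :
    1 ≤ (Gp n s).coeff (Finsupp.single i0 (2 * s)) := by
  induction s with
  | zero => simp [Gp]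
  | succ s ih =>
    have key : coeff (Finsupp.single i0 2) (∑ i : Fin n, X i ^ 2 : MvPolynomial (Fin n) ℕ)
        = 1 := by
      rw [coeff_sum]
      simp_rw [coeff_X_pow, Finsupp.single_left_inj (by norm_num : (2:ℕ) ≠ 0)]
      rw [Finset.sum_ite_eq' Finset.univ i0 (fun _ => 1)]
      simp
    have hmem : ((Finsupp.single i0 (2 * s), Finsupp.single i0 2) :
        (Fin n →₀ ℕ) × (Fin n →₀ ℕ)) ∈ Finset.HasAntidiagonal.antidiagonal (Finsupp.single i0 (2 * (s + 1))) := by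
      rw [Finset.HasAntidiagonal.mem_antidiagonal, ← Finsupp.single_add]
      congr 1
    have : (Gp n (s + 1)).coeff (Finsupp.single i0 (2 * (s + 1)))
        = ∑ x ∈ Finset.HasAntidiagonal.antidiagonal (Finsupp.single i0 (2 * (s + 1))),
            (Gp n s).coeff x.1 * coeff x.2 (∑ i : Fin n, X i ^ 2 : MvPolynomial (Fin n) ℕ) := by
      rw [Gp, pow_succ, ← Gp, coeff_mul]
    rw [this]
    calc 1 ≤ (Gp n s).coeff (Finsupp.single i0 (2 * s))
            * coeff (Finsupp.single i0 2) (∑ i : Fin n, X i ^ 2 : MvPolynomial (Fin n) ℕ) := by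
              rw [key]; omega
      _ ≤ _ := Finset.single_le_sum
          (f := fun x : (Fin n →₀ ℕ) × (Fin n →₀ ℕ) =>
            (Gp n s).coeff x.1 * coeff x.2 (∑ i : Fin n, X i ^ 2 : MvPolynomial (Fin n) ℕ))
          (fun x _ => Nat.zero_le _) hmem
end Conc

theorem stmt4 (n s : ℕ) (hn : 2 ≤ n) (hs : 1 ≤ s)
    (I : Ideal (MvPolynomial (Fin n) ℂ))
    (hI : (I : Set (MvPolynomial (Fin n) ℂ)) = annSet ((∑ i, X i ^ 2) ^ s)) :
    apolar ((∑ i : Fin n, X i ^ 2) ^ (s + 1)) ((∑ i : Fin n, X i ^ 2) ^ s) = 0 ∧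
    apolar ((∑ i : Fin n, X i ^ 2) ^ s) ((∑ i : Fin n, X i ^ 2) ^ s) ≠ 0 ∧
    apolar ((X (⟨0, by omega⟩ : Fin n) : MvPolynomial (Fin n) ℂ) ^ (2 * s))
      ((∑ i : Fin n, X i ^ 2) ^ s) ≠ 0 ∧
    quotDeg I (2 * s) ≠ ⊥ ∧
    ∀ i, 2 * s < i → quotDeg I i = ⊥ := by
  set i0 : Fin n := ⟨0, by omega⟩ with hi0
  -- Part 1
  have h1 : apolar ((∑ i : Fin n, X i ^ 2) ^ (s + 1)) ((∑ i : Fin n, X i ^ 2) ^ s) = 0 := by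
    refine apolar_eq_zero _ _ fun d hd e he => exists_lt_of_degree_lt d e ?_
    have hd' := degree_of_mem_support n (s + 1) hd
    have he' := degree_of_mem_support n s he
    omega
  have hd0mem : Finsupp.single i0 (2 * s) ∈ (Gp n s).support := by
    rw [MvPolynomial.mem_support_iff]
    have := Gp_coeff_pos n s (by omega) i0
    omega
  -- Part 2
  have h2 : apolar ((∑ i : Fin n, X i ^ 2) ^ s) ((∑ i : Fin n, X i ^ 2) ^ s) ≠ 0 := by
    rw [apolar_diag _ _ (fun d hd e he hne => exists_lt_of_ne_of_degree_eq d e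
      (by rw [degree_of_mem_support n s hd, degree_of_mem_support n s he]) hne)]
    rw [Ne, monomial_eq_zero]
    have hcast : (∑ d ∈ ((∑ i : Fin n, X i ^ 2 : MvPolynomial (Fin n) ℂ) ^ s).support,
          coeff d ((∑ i : Fin n, X i ^ 2) ^ s) * coeff d ((∑ i : Fin n, X i ^ 2) ^ s)
            * ∏ j ∈ d.support, ((d j).factorial : ℂ))
        = ((∑ d ∈ (Gp n s).support,
            (Gp n s).coeff d * (Gp n s).coeff d * ∏ j ∈ d.support, (d j).factorial : ℕ) : ℂ) := by
      rw [Fp_support]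
      push_cast
      exact Finset.sum_congr rfl fun d _ => by rw [Fp_coeff]
    rw [hcast, Nat.cast_eq_zero]
    intro h0
    rw [Finset.sum_eq_zero_iff] at h0
    have := h0 _ hd0mem
    simp only [Nat.mul_eq_zero, Finset.prod_eq_zero_iff] at this
    rcases this with (h | h) | ⟨j, _, h⟩
    · exact MvPolynomial.mem_support_iff.1 hd0mem h
    · exact MvPolynomial.mem_support_iff.1 hd0mem h
    · exact Nat.factorial_ne_zero _ h
  -- Part 3
  have h3 : apolar ((X i0 : MvPolynomial (Fin n) ℂ) ^ (2 * s))
      ((∑ i : Fin n, X i ^ 2) ^ s) ≠ 0 := by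
    rw [apolar_diag _ _ (fun d hd e he hne => exists_lt_of_ne_of_degree_eq d e
      (by
        have hdd : d.degree = 2 * s := by
          rw [Finsupp.degree_eq_weight_one]
          exact isHomogeneous_X_pow i0 (2 * s) (MvPolynomial.mem_support_iff.1 hd)
        rw [hdd, degree_of_mem_support n s he]) hne)]
    simp only [ne_eq, monomial_eq_zero, MvPolynomial.support_X_pow, Finset.sum_singleton]
    refine mul_ne_zero (mul_ne_zero ?_ ?_) ?_
    · rw [coeff_X_pow]
      simp
    · rw [Fp_coeff]
      exact_mod_cast MvPolynomial.mem_support_iff.1 hd0mem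
    · refine Finset.prod_ne_zero_iff.2 fun j _ => ?_
      exact_mod_cast Nat.factorial_ne_zero _
  -- Part 5 helper
  have h5 : ∀ i, 2 * s < i → quotDeg I i = ⊥ := by
    intro i hi
    rw [eq_bot_iff]
    rintro x ⟨P, hP, rfl⟩
    rw [Submodule.mem_bot]
    have hPI : P ∈ I := by
      rw [← SetLike.mem_coe, hI]
      refine apolar_eq_zero _ _ fun d hd e he => exists_lt_of_degree_lt d e ?_
      have hdd : d.degree = i := by
        rw [Finsupp.degree_eq_weight_one]
        exact ((mem_homogeneousSubmodule _ _).1 hP) (MvPolynomial.mem_support_iff.1 hd)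
      have := degree_of_mem_support n s he
      omega
    exact (Ideal.Quotient.eq_zero_iff_mem).2 hPI
  -- Part 4
  have h4 : quotDeg I (2 * s) ≠ ⊥ := by
    intro hbot
    have hmem : (Ideal.Quotient.mkₐ ℂ I).toLinearMap ((X i0 : MvPolynomial (Fin n) ℂ) ^ (2 * s))
        ∈ quotDeg I (2 * s) :=
      Submodule.mem_map_of_mem ((mem_homogeneousSubmodule _ _).2 (isHomogeneous_X_pow _ _))
    rw [hbot, Submodule.mem_bot] at hmem
    have hPI : (X i0 : MvPolynomial (Fin n) ℂ) ^ (2 * s) ∈ I := by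
      rw [← Ideal.Quotient.eq_zero_iff_mem]
      exact hmem
    rw [← SetLike.mem_coe, hI] at hPI
    exact h3 hPI
  exact ⟨h1, h2, h3, h4, h5⟩
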